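/- In an LM-system R, the left-hand sides of any two distinct rules are not unifiable. -/

import Mathlib

/-! Basic first-order terms, positions, substitutions and rewriting. -/

inductive Term (F : Type) : Type
  | var : Nat → Term F
  | app : F → List (Term F) → Term F

namespace Term

def subst {F : Type} (σ : Nat → Term F) : Term F → Term F
  | var n => σ n
  | app f ts => app f (ts.attach.map fun ⟨t, _⟩ => t.subst σ)

def root {F : Type} : Term F → Option F
  | var _ => none
  | app f _ => some f

def label {F : Type} : Term F → F ⊕ Nat
  | var n => Sum.inr n
  | app f _ => Sum.inl f

def IsVar {F : Type} : Term F → Prop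
  | var _ => True
  | app _ _ => False

def varsL {F : Type} : Term F → List Nat
  | var n => [n]
  | app _ ts => (ts.attach.map fun ⟨t, _⟩ => t.varsL).flatten

end Term

abbrev Rule (F : Type) := Term F × Term F
abbrev TRS (F : Type) := Set (Rule F)

/-- `SubtermAt t p u` : the subterm of `t` at position `p` is `u`. -/
inductive SubtermAt {F : Type} : Term F → List Nat → Term F → Prop
  | here (t : Term F) : SubtermAt t [] t
  | there {f : F} {ts : List (Term F)} {i : Nat} {u : Term F} {p : List Nat} {v : Term F} :
      ts[i]? = some u → SubtermAt u p v → SubtermAt (Term.app f ts) (i :: p) v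

/-- `ReplaceAt t p v t'` : replacing the subterm of `t` at position `p` by `v` yields `t'`. -/
inductive ReplaceAt {F : Type} : Term F → List Nat → Term F → Term F → Prop
  | here (t u : Term F) : ReplaceAt t [] u u
  | there {f : F} {ts : List (Term F)} {i : Nat} {u : Term F} {p : List Nat} {v w : Term F} :
      ts[i]? = some u → ReplaceAt u p v w →
      ReplaceAt (Term.app f ts) (i :: p) v (Term.app f (ts.set i w))

variable {F : Type}

/-- One rewrite step using the given rule (at some position, with some substitution). -/
def RuleStep (ρ : Rule F) (s t : Term F) : Prop :=
  ∃ (σ : Nat → Term F) (p : List Nat),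
    SubtermAt s p (ρ.1.subst σ) ∧ ReplaceAt s p (ρ.2.subst σ) t

def OneStep (R : TRS F) (s t : Term F) : Prop := ∃ ρ ∈ R, RuleStep ρ s t

/-- A rewrite step at the root position. -/
def RootStep (R : TRS F) (s t : Term F) : Prop :=
  ∃ ρ ∈ R, ∃ σ : Nat → Term F, s = ρ.1.subst σ ∧ t = ρ.2.subst σ

def StarRW (R : TRS F) : Term F → Term F → Prop := Relation.ReflTransGen (OneStep R)
def Plus (R : TRS F) : Term F → Term F → Prop := Relation.TransGen (OneStep R)
/-- Convertibility (the congruence / equational theory generated by `R`). -/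
def Conv (R : TRS F) : Term F → Term F → Prop := Relation.EqvGen (OneStep R)
def Joinable (R : TRS F) (s t : Term F) : Prop := ∃ u, StarRW R s u ∧ StarRW R t u
def NormalForm (R : TRS F) (t : Term F) : Prop := ∀ u, ¬ OneStep R t u
/-- `t` is the `R`-normal form of `s`. -/
def NFof (R : TRS F) (s t : Term F) : Prop := StarRW R s t ∧ NormalForm R t
def Terminating (R : TRS F) : Prop := WellFounded (fun a b : Term F => OneStep R b a)
def Confluent (R : TRS F) : Prop := ∀ s t u, StarRW R s t → StarRW R s u → Joinable R t u
def Convergent (R : TRS F) : Prop := Confluent R ∧ Terminating R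

/-- every proper subterm is irreducible -/
def EpsIrreducible (R : TRS F) (t : Term F) : Prop :=
  ∀ p u, SubtermAt t p u → p ≠ [] → NormalForm R u

def InnermostRedex (R : TRS F) (t : Term F) : Prop :=
  EpsIrreducible R t ∧ ¬ NormalForm R t

/-- Forward-closed, via the one-step-to-normal-form characterization. -/
def FCclosed (R : TRS F) : Prop :=
  ∀ t, InnermostRedex R t → ∀ u, NFof R t u → OneStep R t u

def Unifies (σ : Nat → Term F) (s t : Term F) : Prop := s.subst σ = t.subst σ

def IsMGU (σ : Nat → Term F) (s t : Term F) : Prop :=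
  Unifies σ s t ∧ ∀ τ, Unifies τ s t → ∃ δ, ∀ x, τ x = (σ x).subst δ

def IsRenaming (ρ : Nat → Term F) : Prop :=
  ∃ f : Nat → Nat, Function.Injective f ∧ ∀ n, ρ n = Term.var (f n)

/-- Redundancy criterion for an oriented equation `e` whose right-hand side is
reachable from its left-hand side: some proper subterm of the lhs is reducible. -/
def Redundant (R : TRS F) (e : Rule F) : Prop :=
  ∃ p u, p ≠ ([] : List Nat) ∧ SubtermAt e.1 p u ∧ ¬ NormalForm R u

/-- `R₁ ↝ R₂`: forward overlaps of rules of `R₂` (renamed apart) into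
right-hand sides of rules of `R₁`, at non-variable positions, via an mgu. -/
def FStep (R₁ R₂ : TRS F) : TRS F :=
  { e | ∃ (l₁ r₁ l₂ r₂ : Term F) (ρ : Nat → Term F) (p : List Nat) (u : Term F)
          (σ : Nat → Term F) (r₁' : Term F),
      (l₁, r₁) ∈ R₁ ∧ (l₂, r₂) ∈ R₂ ∧ IsRenaming ρ ∧
      SubtermAt r₁ p u ∧ ¬ u.IsVar ∧ IsMGU σ u (l₂.subst ρ) ∧
      ReplaceAt r₁ p (r₂.subst ρ) r₁' ∧ e = (l₁.subst σ, r₁'.subst σ) }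

def FCiter (R : TRS F) : Nat → TRS F
  | 0 => R
  | k + 1 => FCiter R k ∪ { e | e ∈ FStep (FCiter R k) R ∧ ¬ Redundant (FCiter R k) e }

def FCinf (R : TRS F) : TRS F := ⋃ k, FCiter R k

/-- Forward-closed, via the forward-closure construction: `FC(R) = R`. -/
def ForwardClosedFC (R : TRS F) : Prop := FCinf R = R

/-- `RHS(R)`: `R` together with the conclusions of right-hand-side critical
pair inferences (second rule renamed apart). -/
def RHSset (R : TRS F) : TRS F :=
  R ∪ { e | ∃ (s t u₀ v₀ : Term F) (ρ σ : Nat → Term F), (s, t) ∈ R ∧ (u₀, v₀) ∈ R ∧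
        IsRenaming ρ ∧ IsMGU σ t (v₀.subst ρ) ∧
        s.subst σ ≠ (u₀.subst ρ).subst σ ∧ e = (s.subst σ, (u₀.subst ρ).subst σ) }

/-- the (unordered) pairs of root symbols of two equations coincide -/
def RootPairSimilar (e₁ e₂ : Rule F) : Prop :=
  (e₁.1.root = e₂.1.root ∧ e₁.2.root = e₂.2.root) ∨
  (e₁.1.root = e₂.2.root ∧ e₁.2.root = e₂.1.root)

def QuasiDet (E : TRS F) : Prop :=
  (∀ e ∈ E, ¬ e.1.IsVar ∧ ¬ e.2.IsVar) ∧
  (∀ e ∈ E, e.1.root ≠ e.2.root) ∧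
  (∀ e₁ ∈ E, ∀ e₂ ∈ E, e₁ ≠ e₂ → ¬ RootPairSimilar e₁ e₂)

def HasRootPairRepetition (E : TRS F) : Prop :=
  ∃ e₁ ∈ E, ∃ e₂ ∈ E, e₁ ≠ e₂ ∧ RootPairSimilar e₁ e₂

def VarPreserving (R : TRS F) : Prop :=
  ∀ e ∈ R, ∀ n, n ∈ Term.varsL e.1 ↔ n ∈ Term.varsL e.2

def RightReduced (R : TRS F) : Prop := ∀ e ∈ R, NormalForm R e.2

def AlmostLeftReduced (R : TRS F) : Prop :=
  ¬ ∃ (l₁ r₁ l₂ r₂ : Term F) (p : List Nat) (u : Term F) (σ : Nat → Term F),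
      (l₁, r₁) ∈ R ∧ (l₂, r₂) ∈ R ∧ p ≠ [] ∧ SubtermAt l₁ p u ∧ u = l₂.subst σ

def NonSubtermCollapsing (R : TRS F) : Prop :=
  ¬ ∃ (t u : Term F) (p : List Nat), p ≠ [] ∧ SubtermAt u p t ∧ Conv R t u

structure LMSystem (R : TRS F) : Prop where
  convergent : Convergent R
  almostLeftReduced : AlmostLeftReduced R
  rightReduced : RightReduced R
  nonCollapsing : NonSubtermCollapsing R
  forwardClosed : FCclosed R
  quasiDet : QuasiDet (RHSset R)

/-- the symbol (function symbol or variable) of a term at a position, if defined -/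
def labelAt {F : Type} : List Nat → Term F → Option (F ⊕ Nat)
  | [], t => some t.label
  | i :: p, Term.app _ ts => (ts[i]?).bind (labelAt p)
  | _ :: _, Term.var _ => none

/-- outermost distinguishing position -/
def ODP (s t : Term F) (p : List Nat) : Prop :=
  (labelAt p s ≠ none ∨ labelAt p t ≠ none) ∧
  labelAt p s ≠ labelAt p t ∧
  ∀ q, q <+: p → q ≠ p → labelAt q s = labelAt q t


/-! ### Auxiliary infrastructure -/

namespace Term

def size {F : Type} : Term F → Nat
  | var _ => 1
  | app _ ts => 1 + (ts.attach.map fun ⟨t, _⟩ => t.size).sum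

theorem subst_app {F : Type} (σ : Nat → Term F) (f : F) (ts : List (Term F)) :
    (app f ts).subst σ = app f (ts.map (fun t => t.subst σ)) := by
  simp [Term.subst]

theorem subst_var' {F : Type} (σ : Nat → Term F) (n : Nat) :
    (var n : Term F).subst σ = σ n := by simp [Term.subst]

theorem varsL_var {F : Type} (n : Nat) : (var n : Term F).varsL = [n] := by
  simp [Term.varsL]

theorem size_app {F : Type} (f : F) (ts : List (Term F)) :
    (app f ts).size = 1 + (ts.map size).sum := by
  simp [Term.size]

theorem varsL_app {F : Type} (f : F) (ts : List (Term F)) :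
    (app f ts).varsL = (ts.map varsL).flatten := by
  simp [Term.varsL]

theorem size_pos {F : Type} (t : Term F) : 0 < t.size := by
  cases t with
  | var n => simp [Term.size]
  | app f ts => rw [size_app]; omega

/-- custom induction principle for nested `Term` -/
theorem my_ind {F : Type} {P : Term F → Prop} (hv : ∀ n, P (var n))
    (ha : ∀ f ts, (∀ t ∈ ts, P t) → P (app f ts)) : ∀ t, P t := by
  have key : ∀ n (t : Term F), t.size ≤ n → P t := by
    intro n
    induction n with
    | zero => intro t ht; have := size_pos t; omega
    | succ n ih =>
      intro t ht
      cases t with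
      | var m => exact hv m
      | app f ts =>
        refine ha f ts (fun t' ht' => ih t' ?_)
        rw [size_app] at ht
        have : t'.size ≤ (ts.map size).sum := List.le_sum_of_mem (List.mem_map_of_mem ht')
        omega
  exact fun t => key t.size t le_rfl

theorem subst_ext_vars {F : Type} {σ σ' : Nat → Term F} :
    ∀ t : Term F, (∀ x ∈ t.varsL, σ x = σ' x) → t.subst σ = t.subst σ' := by
  refine my_ind (fun n h => ?_) (fun f ts ih h => ?_)
  · rw [subst_var', subst_var']
    exact h _ (by simp [varsL_var])
  · rw [subst_app, subst_app]
    congr 1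
    refine List.map_congr_left (fun t ht => ih t ht (fun x hx => h x ?_))
    rw [varsL_app]
    exact List.mem_flatten.2 ⟨t.varsL, List.mem_map_of_mem ht, hx⟩

theorem subst_subst {F : Type} (σ δ : Nat → Term F) :
    ∀ t : Term F, (t.subst σ).subst δ = t.subst (fun x => (σ x).subst δ) := by
  refine my_ind (fun n => by rw [subst_var', subst_var']) (fun f ts ih => ?_)
  rw [subst_app, subst_app, subst_app, List.map_map]
  congr 1
  exact List.map_congr_left (fun t ht => ih t ht)

theorem subst_id {F : Type} : ∀ t : Term F, t.subst var = t := by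
  refine my_ind (fun n => by rw [subst_var']) (fun f ts ih => ?_)
  rw [subst_app]
  congr 1
  exact List.map_congr_left ih |>.trans (List.map_id _)

theorem mem_varsL_subst {F : Type} {y : Nat} (σ : Nat → Term F) :
    ∀ t : Term F, y ∈ (t.subst σ).varsL ↔ ∃ x ∈ t.varsL, y ∈ (σ x).varsL := by
  refine my_ind (fun n => ?_) (fun f ts ih => ?_)
  · rw [subst_var', varsL_var]; simp
  · rw [subst_app, varsL_app, varsL_app]
    constructor
    · intro h
      obtain ⟨l, hl, hy⟩ := List.mem_flatten.1 h
      rw [List.map_map] at hl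
      obtain ⟨t, ht, rfl⟩ := List.mem_map.1 hl
      obtain ⟨x, hx, hyx⟩ := (ih t ht).1 hy
      exact ⟨x, List.mem_flatten.2 ⟨t.varsL, List.mem_map_of_mem ht, hx⟩, hyx⟩
    · rintro ⟨x, hx, hyx⟩
      obtain ⟨l, hl, hxl⟩ := List.mem_flatten.1 hx
      obtain ⟨t, ht, rfl⟩ := List.mem_map.1 hl
      refine List.mem_flatten.2 ⟨(t.subst σ).varsL, ?_, (ih t ht).2 ⟨x, hxl, hyx⟩⟩
      rw [List.map_map]
      exact List.mem_map_of_mem ht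

theorem root_subst {F : Type} {t : Term F} (h : ¬ t.IsVar) (σ : Nat → Term F) :
    (t.subst σ).root = t.root := by
  cases t with
  | var n => exact absurd trivial h
  | app f ts => rw [subst_app]; rfl

theorem not_isVar_iff {F : Type} {t : Term F} : ¬ t.IsVar ↔ ∃ f ts, t = app f ts := by
  cases t with
  | var n => simp [Term.IsVar]
  | app f ts => simpa [Term.IsVar] using ⟨f, ts, rfl⟩

end Term
section Positions
variable {F : Type}

theorem subtermAt_nil {t u : Term F} (h : SubtermAt t [] u) : u = t := by
  cases h; rfl

theorem replaceAt_nil {t v t' : Term F} (h : ReplaceAt t [] v t') : t' = v := by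
  cases h; rfl

theorem subtermAt_append {t u v : Term F} {p q : List Nat}
    (h1 : SubtermAt t p u) (h2 : SubtermAt u q v) : SubtermAt t (p ++ q) v := by
  induction h1 with
  | here => exact h2
  | there hget _ ih => exact SubtermAt.there hget (ih h2)

theorem subtermAt_subst {t u : Term F} {p : List Nat} (σ : Nat → Term F)
    (h : SubtermAt t p u) : SubtermAt (t.subst σ) p (u.subst σ) := by
  induction h with
  | here => exact SubtermAt.here _
  | there hget hsub ih =>
    rw [Term.subst_app]
    exact SubtermAt.there (by rw [List.getElem?_map, hget]; rfl) ih

theorem subtermAt_size_lt {t u : Term F} {p : List Nat}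
    (h : SubtermAt t p u) (hp : p ≠ []) : u.size < t.size := by
  induction h with
  | here => exact absurd rfl hp
  | there hget hsub ih =>
    rename_i f ts i u' p' v
    have hmem : u' ∈ ts := List.mem_of_getElem? hget
    have h1 : u'.size ≤ (ts.map Term.size).sum := List.le_sum_of_mem (List.mem_map_of_mem hmem)
    have h2 : v.size ≤ u'.size := by
      cases p' with
      | nil => rw [subtermAt_nil hsub]
      | cons a q => exact le_of_lt (ih (by simp))
    rw [Term.size_app]
    omega

theorem mem_varsL_subterm {x : Nat} :
    ∀ t : Term F, x ∈ t.varsL → ∃ p, SubtermAt t p (Term.var x) ∧ (t ≠ Term.var x → p ≠ []) := by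
  refine Term.my_ind (fun n h => ?_) (fun f ts ih h => ?_)
  · rw [Term.varsL_var] at h
    simp at h
    subst h
    exact ⟨[], SubtermAt.here _, fun hne => absurd rfl hne⟩
  · rw [Term.varsL_app] at h
    obtain ⟨l, hl, hx⟩ := List.mem_flatten.1 h
    obtain ⟨t, ht, rfl⟩ := List.mem_map.1 hl
    obtain ⟨p, hp, _⟩ := ih t ht hx
    obtain ⟨i, hi⟩ := List.getElem?_of_mem ht
    exact ⟨i :: p, SubtermAt.there hi hp, fun _ => by simp⟩

theorem exists_replaceAt {t u : Term F} {p : List Nat}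
    (h : SubtermAt t p u) (v : Term F) : ∃ t', ReplaceAt t p v t' := by
  induction h with
  | here t => exact ⟨v, ReplaceAt.here _ _⟩
  | there hget hsub ih =>
    obtain ⟨w, hw⟩ := ih
    exact ⟨_, ReplaceAt.there hget hw⟩

end Positions

section Rewriting
variable {F : Type} {R : TRS F}

theorem ruleStep_root {e : Rule F} (σ : Nat → Term F) :
    RuleStep e (e.1.subst σ) (e.2.subst σ) :=
  ⟨σ, [], SubtermAt.here _, ReplaceAt.here _ _⟩

/-- one step within a context -/
theorem ruleStep_context {e : Rule F} {t w w' : Term F} {p : List Nat}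
    (hsub : SubtermAt t p w) (hstep : RuleStep e w w') :
    ∃ t', RuleStep e t t' ∧ (p ≠ [] → t'.root = t.root) := by
  induction hsub with
  | here => exact ⟨w', hstep, fun h => absurd rfl h⟩
  | there hget hsub ih =>
    obtain ⟨t₁, ⟨σ, q, hs, hr⟩, _⟩ := ih hstep
    exact ⟨_, ⟨σ, _ :: q, SubtermAt.there hget hs, ReplaceAt.there hget hr⟩,
      fun _ => rfl⟩

theorem oneStep_context {t w w' : Term F} {p : List Nat}
    (hsub : SubtermAt t p w) (hstep : OneStep R w w') :
    ∃ t', OneStep R t t' ∧ (p ≠ [] → t'.root = t.root) := by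
  obtain ⟨e, he, hrs⟩ := hstep
  obtain ⟨t', h1, h2⟩ := ruleStep_context hsub hrs
  exact ⟨t', ⟨e, he, h1⟩, h2⟩

theorem normal_subterm {t w : Term F} {p : List Nat} (hn : NormalForm R t)
    (hsub : SubtermAt t p w) : NormalForm R w := by
  intro u hu
  obtain ⟨t', ht', _⟩ := oneStep_context hsub hu
  exact hn t' ht'

theorem not_normal_iff {t : Term F} : ¬ NormalForm R t ↔ ∃ u, OneStep R t u := by
  unfold NormalForm; push_neg; rfl

theorem star_of_normal {t u : Term F} (hn : NormalForm R t) (h : StarRW R t u) : u = t := by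
  induction h using Relation.ReflTransGen.head_induction_on with
  | refl => rfl
  | head hstep _ _ => exact absurd hstep (hn _)

theorem exists_nf (hterm : Terminating R) (t : Term F) : ∃ u, NFof R t u := by
  induction t using WellFounded.induction hterm with
  | _ t ih =>
    by_cases hn : NormalForm R t
    · exact ⟨t, Relation.ReflTransGen.refl, hn⟩
    · obtain ⟨t', ht'⟩ := not_normal_iff.1 hn
      obtain ⟨u, hu1, hu2⟩ := ih t' ht'
      exact ⟨u, Relation.ReflTransGen.head ht' hu1, hu2⟩

theorem nfof_of_reduct (hconf : Confluent R) {s t u : Term F}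
    (hnf : NFof R s u) (hst : StarRW R s t) : NFof R t u := by
  obtain ⟨w, hw1, hw2⟩ := hconf s t u hst hnf.1
  have : w = u := star_of_normal hnf.2 hw2
  subst this
  exact ⟨hw1, hnf.2⟩

/-- a rewrite step from a term whose proper subterms are all normal is a root step -/
theorem eps_root_step {t v : Term F} (heps : EpsIrreducible R t) (h : OneStep R t v) :
    ∃ a b μ, (a, b) ∈ R ∧ t = a.subst μ ∧ v = b.subst μ := by
  obtain ⟨⟨a, b⟩, he, μ, p, hsub, hrep⟩ := h
  have hred : ¬ NormalForm R (a.subst μ) :=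
    fun hn => hn _ ⟨(a, b), he, ruleStep_root μ⟩
  have hp : p = [] := by
    by_contra hp
    exact hred (heps p _ hsub hp)
  subst hp
  exact ⟨a, b, μ, he, (subtermAt_nil hsub).symm, replaceAt_nil hrep⟩

end Rewriting
section Chain
variable {F : Type} {R : TRS F}

theorem chain_lemma (hterm : Terminating R) (hconf : Confluent R) (hfc : FCclosed R) :
    ∀ t u : Term F, NFof R t u →
      u.root = t.root ∨
      ∃ a b μ, (a, b) ∈ R ∧ u = b.subst μ ∧ (a.subst μ).root = t.root := by
  intro t
  induction t using WellFounded.induction hterm with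
  | _ t ih =>
    intro u hnf
    by_cases hn : NormalForm R t
    · left; rw [star_of_normal hn hnf.1]
    · by_cases hs : ∃ p w, p ≠ [] ∧ SubtermAt t p w ∧ ¬ NormalForm R w
      · obtain ⟨p, w, hp, hsub, hw⟩ := hs
        obtain ⟨w', hw'⟩ := not_normal_iff.1 hw
        obtain ⟨t', ht', hroot⟩ := oneStep_context hsub hw'
        have hnf' : NFof R t' u :=
          nfof_of_reduct hconf hnf (Relation.ReflTransGen.single ht')
        have hroot' : t'.root = t.root := hroot hp
        rcases ih t' ht' u hnf' with h | ⟨a, b, μ, h1, h2, h3⟩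
        · left; rw [h, hroot']
        · right; exact ⟨a, b, μ, h1, h2, by rw [h3, hroot']⟩
      · push_neg at hs
        have heps : EpsIrreducible R t := fun p w hsub hp => hs p w hp hsub
        have hstep : OneStep R t u := hfc t ⟨heps, hn⟩ u hnf
        obtain ⟨a, b, μ, haR, hta, hub⟩ := eps_root_step heps hstep
        exact Or.inr ⟨a, b, μ, haR, hub, by rw [← hta]⟩

end Chain
section Unification
variable {F : Type}

/-- simultaneous unification of a list of pairs -/
def UL (E : List (Term F × Term F)) (σ : Nat → Term F) : Prop :=
  ∀ pr ∈ E, pr.1.subst σ = pr.2.subst σ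

def MGUL (θ : Nat → Term F) (E : List (Term F × Term F)) : Prop :=
  UL E θ ∧ ∀ τ, UL E τ → ∃ δ, ∀ x, τ x = (θ x).subst δ

def varsE (E : List (Term F × Term F)) : List Nat :=
  E.flatMap (fun pr => pr.1.varsL ++ pr.2.varsL)

def szE (E : List (Term F × Term F)) : Nat :=
  (E.map (fun pr => pr.1.size + pr.2.size)).sum

def VC (E : List (Term F × Term F)) : Nat := (varsE E).toFinset.card

theorem VC_mono {E₁ E₂ : List (Term F × Term F)} (h : ∀ y ∈ varsE E₁, y ∈ varsE E₂) :
    VC E₁ ≤ VC E₂ :=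
  Finset.card_le_card (fun y hy => List.mem_toFinset.2 (h y (List.mem_toFinset.1 hy)))

theorem mgul_nil : MGUL (Term.var : Nat → Term F) [] := by
  refine ⟨fun pr hpr => absurd hpr (List.not_mem_nil), fun τ _ => ⟨τ, fun x => ?_⟩⟩
  rw [Term.subst_var']

theorem occurs_no_unifier {x : Nat} {t : Term F} {ν : Nat → Term F}
    (hx : x ∈ t.varsL) (ht : t ≠ Term.var x) (h : ν x = t.subst ν) : False := by
  obtain ⟨p, hp, hpne⟩ := mem_varsL_subterm t hx
  have hsub : SubtermAt (t.subst ν) p ((Term.var x).subst ν) := subtermAt_subst ν hp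
  rw [Term.subst_var'] at hsub
  have hlt := subtermAt_size_lt hsub (hpne ht)
  rw [← h] at hlt
  omega

/-- swapping the head pair preserves mgu-ness -/
theorem mgul_swap_head {θ : Nat → Term F} {p q : Term F} {E : List (Term F × Term F)}
    (h : MGUL θ ((p, q) :: E)) : MGUL θ ((q, p) :: E) := by
  obtain ⟨hu, hm⟩ := h
  constructor
  · rintro pr hpr
    rcases List.mem_cons.1 hpr with rfl | hpr
    · exact (hu (p, q) (List.mem_cons_self)).symm
    · exact hu pr (List.mem_cons_of_mem _ hpr)
  · intro τ hτ
    refine hm τ ?_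
    rintro pr hpr
    rcases List.mem_cons.1 hpr with rfl | hpr
    · exact (hτ (q, p) (List.mem_cons_self)).symm
    · exact hτ pr (List.mem_cons_of_mem _ hpr)

section Bind
variable {x : Nat} {t : Term F}

/-- the elementary binding substitution -/
noncomputable def bsub (x : Nat) (t : Term F) : Nat → Term F :=
  fun y => if y = x then t else Term.var y

theorem bsub_self : bsub x t x = t := by simp [bsub]

theorem bsub_fix (u : Term F) (hu : x ∉ u.varsL) :
    u.subst (bsub x t) = u := by
  have : u.subst (bsub x t) = u.subst Term.var := by
    refine Term.subst_ext_vars u (fun y hy => ?_)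
    have : y ≠ x := fun hyx => hu (hyx ▸ hy)
    simp [bsub, this]
  rw [this, Term.subst_id]

theorem bind_mgu (hocc : x ∉ t.varsL) {E' : List (Term F × Term F)} {θ' : Nat → Term F}
    (hθ' : MGUL θ' (E'.map (fun pr => (pr.1.subst (bsub x t), pr.2.subst (bsub x t))))) :
    MGUL (fun y => ((bsub x t) y).subst θ') ((Term.var x, t) :: E') := by
  set σx := bsub x t with hσx
  set θ : Nat → Term F := fun y => (σx y).subst θ' with hθdef
  have hcomp : ∀ u : Term F, u.subst θ = (u.subst σx).subst θ' := by
    intro u; rw [Term.subst_subst]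
  have htfix : t.subst σx = t := bsub_fix t hocc
  refine ⟨?_, ?_⟩
  · rintro pr hpr
    rcases List.mem_cons.1 hpr with rfl | hpr
    · show (Term.var x).subst θ = t.subst θ
      rw [Term.subst_var', hcomp t, htfix]
      show (σx x).subst θ' = t.subst θ'
      rw [hσx, bsub_self]
    · rw [hcomp, hcomp]
      exact hθ'.1 _ (List.mem_map_of_mem hpr)
  · intro τ hτ
    have hτx : τ x = t.subst τ := by
      have := hτ (Term.var x, t) (List.mem_cons_self)
      rwa [Term.subst_var'] at this
    have hfix : ∀ y, τ y = (σx y).subst τ := by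
      intro y
      by_cases hy : y = x
      · subst hy; rw [hσx, bsub_self]; exact hτx
      · simp [hσx, bsub, hy, Term.subst_var']
    have hτmap : UL (E'.map (fun pr => (pr.1.subst σx, pr.2.subst σx))) τ := by
      rintro pr hpr
      obtain ⟨pr₀, hpr₀, rfl⟩ := List.mem_map.1 hpr
      show (pr₀.1.subst σx).subst τ = (pr₀.2.subst σx).subst τ
      have key : ∀ u : Term F, (u.subst σx).subst τ = u.subst τ := by
        intro u
        rw [Term.subst_subst]
        exact (Term.subst_ext_vars u (fun y _ => hfix y)).symm
      rw [key, key]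
      exact hτ pr₀ (List.mem_cons_of_mem _ hpr₀)
    obtain ⟨δ, hδ⟩ := hθ'.2 τ hτmap
    refine ⟨δ, fun y => ?_⟩
    calc τ y = (σx y).subst τ := hfix y
      _ = (σx y).subst (fun z => (θ' z).subst δ) :=
          Term.subst_ext_vars _ (fun z _ => hδ z)
      _ = ((σx y).subst θ').subst δ := (Term.subst_subst θ' δ (σx y)).symm

theorem bind_card {E : List (Term F × Term F)} {E' : List (Term F × Term F)}
    (hocc : x ∉ t.varsL) (hx : x ∈ varsE E) (ht : ∀ y ∈ t.varsL, y ∈ varsE E)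
    (hE' : ∀ y ∈ varsE E', y ∈ varsE E) :
    VC (E'.map (fun pr => (pr.1.subst (bsub x t), pr.2.subst (bsub x t)))) < VC E := by
  have hsub : ∀ y ∈ varsE (E'.map (fun pr => (pr.1.subst (bsub x t), pr.2.subst (bsub x t)))),
      y ∈ varsE E ∧ y ≠ x := by
    intro y hy
    obtain ⟨pr, hpr, hypr⟩ := List.mem_flatMap.1 hy
    obtain ⟨pr₀, hpr₀, rfl⟩ := List.mem_map.1 hpr
    have main : ∀ u : Term F, (∀ z ∈ u.varsL, z ∈ varsE E') →
        y ∈ (u.subst (bsub x t)).varsL → y ∈ varsE E ∧ y ≠ x := by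
      intro u hu hyu
      obtain ⟨z, hz, hyz⟩ := (Term.mem_varsL_subst _ u).1 hyu
      by_cases hzx : z = x
      · subst hzx
        rw [bsub_self] at hyz
        exact ⟨ht y hyz, fun hyx => hocc (hyx ▸ hyz)⟩
      · have : bsub x t z = Term.var z := by simp [bsub, hzx]
        rw [this, Term.varsL_var] at hyz
        simp at hyz
        subst hyz
        exact ⟨hE' _ (hu _ hz), hzx⟩
    rcases List.mem_append.1 hypr with hyp | hyp
    · refine main pr₀.1 (fun z hz => List.mem_flatMap.2 ⟨pr₀, hpr₀, by simp [hz]⟩) hyp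
    · refine main pr₀.2 (fun z hz => List.mem_flatMap.2 ⟨pr₀, hpr₀, by simp [hz]⟩) hyp
  have h1 : (varsE (E'.map (fun pr => (pr.1.subst (bsub x t), pr.2.subst (bsub x t))))).toFinset ⊆
      (varsE E).toFinset.erase x := by
    intro y hy
    have := hsub y (List.mem_toFinset.1 hy)
    exact Finset.mem_erase.2 ⟨this.2, List.mem_toFinset.2 this.1⟩
  calc VC (E'.map _) ≤ ((varsE E).toFinset.erase x).card := Finset.card_le_card h1
    _ < (varsE E).toFinset.card := Finset.card_erase_lt_of_mem (List.mem_toFinset.2 hx)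

end Bind

section Decompose

theorem map_eq_zip {h₁ h₂ : Term F → Term F} :
    ∀ {ss ts : List (Term F)}, ss.map h₁ = ts.map h₂ →
      ∀ pr ∈ ss.zip ts, h₁ pr.1 = h₂ pr.2 := by
  intro ss
  induction ss with
  | nil => intro ts _ pr hpr; simp at hpr
  | cons a ss ih =>
    intro ts h pr hpr
    cases ts with
    | nil => simp at hpr
    | cons b ts =>
      simp only [List.map_cons, List.cons.injEq] at h
      rcases List.mem_cons.1 hpr with rfl | hpr
      · exact h.1
      · exact ih h.2 pr hpr

theorem zip_eq_map {h₁ h₂ : Term F → Term F} :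
    ∀ {ss ts : List (Term F)}, ss.length = ts.length →
      (∀ pr ∈ ss.zip ts, h₁ pr.1 = h₂ pr.2) → ss.map h₁ = ts.map h₂ := by
  intro ss
  induction ss with
  | nil => intro ts h _; cases ts with
    | nil => rfl
    | cons b ts => simp at h
  | cons a ss ih =>
    intro ts hlen h
    cases ts with
    | nil => simp at hlen
    | cons b ts =>
      simp only [List.map_cons]
      refine congrArg₂ _ (h (a, b) (by simp [List.zip_cons_cons])) ?_
      exact ih (by simpa using hlen) (fun pr hpr => h pr (by simp [List.zip_cons_cons, hpr]))

theorem zip_size_le : ∀ (ss ts : List (Term F)),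
    (((ss.zip ts).map (fun pr => pr.1.size + pr.2.size)).sum) ≤
      (ss.map Term.size).sum + (ts.map Term.size).sum := by
  intro ss
  induction ss with
  | nil => intro ts; simp
  | cons a ss ih =>
    intro ts
    cases ts with
    | nil => simp
    | cons b ts =>
      simp only [List.zip_cons_cons, List.map_cons, List.sum_cons]
      have := ih ts
      omega

theorem decomp_mgu {f : F} {ss ts : List (Term F)} {E' : List (Term F × Term F)}
    (hlen : ss.length = ts.length) {θ : Nat → Term F}
    (hθ : MGUL θ (ss.zip ts ++ E')) :
    MGUL θ ((Term.app f ss, Term.app f ts) :: E') := by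
  constructor
  · rintro pr hpr
    rcases List.mem_cons.1 hpr with rfl | hpr
    · show (Term.app f ss).subst θ = (Term.app f ts).subst θ
      rw [Term.subst_app, Term.subst_app]
      exact congrArg _ (zip_eq_map hlen
        (fun pr hpr => hθ.1 pr (List.mem_append_left _ hpr)))
    · exact hθ.1 pr (List.mem_append_right _ hpr)
  · intro τ hτ
    refine hθ.2 τ ?_
    intro pr hpr
    rcases List.mem_append.1 hpr with hpr | hpr
    · have hhead := hτ _ (List.mem_cons_self)
      rw [Term.subst_app, Term.subst_app] at hhead
      have := congrArg (fun t : Term F => t) hhead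
      simp only [Term.app.injEq] at hhead
      exact map_eq_zip hhead.2 pr hpr
    · exact hτ pr (List.mem_cons_of_mem _ hpr)

end Decompose

theorem varsE_cons_left {s t : Term F} {E' : List (Term F × Term F)} :
    ∀ y ∈ s.varsL, y ∈ varsE ((s, t) :: E') := by
  intro y hy
  exact List.mem_flatMap.2 ⟨(s, t), List.mem_cons_self, by simp [hy]⟩

theorem varsE_cons_right {s t : Term F} {E' : List (Term F × Term F)} :
    ∀ y ∈ t.varsL, y ∈ varsE ((s, t) :: E') := by
  intro y hy
  exact List.mem_flatMap.2 ⟨(s, t), List.mem_cons_self, by simp [hy]⟩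

theorem varsE_cons_tail {s t : Term F} {E' : List (Term F × Term F)} :
    ∀ y ∈ varsE E', y ∈ varsE ((s, t) :: E') := by
  intro y hy
  obtain ⟨pr, hpr, hypr⟩ := List.mem_flatMap.1 hy
  exact List.mem_flatMap.2 ⟨pr, List.mem_cons_of_mem _ hpr, hypr⟩

theorem unifyL : ∀ (v m : Nat) (E : List (Term F × Term F)), VC E ≤ v → szE E ≤ m →
    (∃ ν, UL E ν) → ∃ θ, MGUL θ E := by
  intro v
  induction v using Nat.strong_induction_on with
  | _ v IHv =>
  intro m
  induction m using Nat.strong_induction_on with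
  | _ m IHm =>
  intro E hv hm hE
  obtain ⟨ν, hν⟩ := hE
  cases E with
  | nil => exact ⟨Term.var, mgul_nil⟩
  | cons pr E' =>
    obtain ⟨s, t⟩ := pr
    have hhead : s.subst ν = t.subst ν := hν (s, t) (List.mem_cons_self)
    have hνE' : UL E' ν := fun pr hpr => hν pr (List.mem_cons_of_mem _ hpr)
    -- the binding case, abstracted over orientation
    have bindcase : ∀ (x : Nat) (u : Term F), x ∉ u.varsL → ν x = u.subst ν →
        (Term.var x, u) = (s, t) ∨ (u, Term.var x) = (s, t) →
        ∃ θ, MGUL θ ((s, t) :: E') := by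
      intro x u hocc hνx hor
      set E'' := E'.map (fun pr => (pr.1.subst (bsub x u), pr.2.subst (bsub x u))) with hE''
      have hcard : VC E'' < VC ((s, t) :: E') := by
        rcases hor with h | h
        · injection h with h1 h2
          subst h1; subst h2
          exact bind_card hocc (varsE_cons_left x (by rw [Term.varsL_var]; simp))
            varsE_cons_right varsE_cons_tail
        · injection h with h1 h2
          subst h1; subst h2
          exact bind_card hocc (varsE_cons_right x (by rw [Term.varsL_var]; simp))
            varsE_cons_left varsE_cons_tail
      have hULmap : UL E'' ν := by
        rintro pr2 hpr2
        obtain ⟨pr₀, hpr₀, rfl⟩ := List.mem_map.1 hpr2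
        have key : ∀ w : Term F, (w.subst (bsub x u)).subst ν = w.subst ν := by
          intro w
          rw [Term.subst_subst]
          refine (Term.subst_ext_vars w (fun y _ => ?_)).symm
          by_cases hy : y = x
          · subst hy; rw [bsub_self]; exact hνx
          · simp [bsub, hy, Term.subst_var']
        show (pr₀.1.subst (bsub x u)).subst ν = (pr₀.2.subst (bsub x u)).subst ν
        rw [key, key]
        exact hνE' pr₀ hpr₀
      obtain ⟨θ', hθ'⟩ := IHv (VC E'') (lt_of_lt_of_le hcard hv) (szE E'') E''
        le_rfl le_rfl ⟨ν, hULmap⟩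
      have hmg : MGUL (fun y => ((bsub x u) y).subst θ') ((Term.var x, u) :: E') :=
        bind_mgu hocc hθ'
      rcases hor with h | h
      · rw [h] at hmg; exact ⟨_, hmg⟩
      · rw [← h]; exact ⟨_, mgul_swap_head hmg⟩
    cases s with
    | var x =>
      by_cases hxt : t = Term.var x
      · -- trivial pair
        subst hxt
        have hsz : szE E' < m := by
          have : szE ((Term.var x, Term.var x) :: E') = 2 + szE E' := by
            simp [szE, Term.size]
          omega
        obtain ⟨θ, hθ⟩ := IHm (szE E') hsz E'
          (le_trans (VC_mono varsE_cons_tail) hv) le_rfl ⟨ν, hνE'⟩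
        refine ⟨θ, ?_, fun τ hτ => hθ.2 τ (fun pr hpr => hτ pr (List.mem_cons_of_mem _ hpr))⟩
        rintro pr hpr
        rcases List.mem_cons.1 hpr with rfl | hpr
        · rfl
        · exact hθ.1 pr hpr
      · by_cases hocc : x ∈ t.varsL
        · rw [Term.subst_var'] at hhead
          exact absurd hhead (fun h => occurs_no_unifier hocc hxt h)
        · rw [Term.subst_var'] at hhead
          exact bindcase x t hocc hhead (Or.inl rfl)
    | app f ss =>
      cases t with
      | var x =>
        by_cases hocc : x ∈ (Term.app f ss).varsL
        · rw [Term.subst_var'] at hhead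
          exact absurd hhead.symm
            (fun h => occurs_no_unifier hocc (by intro h'; cases h') h)
        · rw [Term.subst_var'] at hhead
          exact bindcase x (Term.app f ss) hocc hhead.symm (Or.inr rfl)
      | app g ts =>
        rw [Term.subst_app, Term.subst_app] at hhead
        injection hhead with hfg hmap
        subst hfg
        have hlen : ss.length = ts.length := by
          have := congrArg List.length hmap
          simpa using this
        set E'' := ss.zip ts ++ E' with hE''def
        have hvars : ∀ y ∈ varsE E'', y ∈ varsE ((Term.app f ss, Term.app f ts) :: E') := by
          intro y hy
          obtain ⟨pr2, hpr2, hypr2⟩ := List.mem_flatMap.1 hy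
          obtain ⟨z1, z2⟩ := pr2
          rcases List.mem_append.1 hpr2 with hz | hz
          · obtain ⟨hz1, hz2⟩ := List.of_mem_zip hz
            rcases List.mem_append.1 hypr2 with hy1 | hy1
            · refine varsE_cons_left y ?_
              rw [Term.varsL_app]
              exact List.mem_flatten.2 ⟨z1.varsL, List.mem_map_of_mem hz1, hy1⟩
            · refine varsE_cons_right y ?_
              rw [Term.varsL_app]
              exact List.mem_flatten.2 ⟨z2.varsL, List.mem_map_of_mem hz2, hy1⟩
          · exact varsE_cons_tail _ (List.mem_flatMap.2 ⟨(z1, z2), hz, hypr2⟩)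
        have hsz : szE E'' < szE ((Term.app f ss, Term.app f ts) :: E') := by
          have h1 : szE E'' = ((ss.zip ts).map (fun pr => pr.1.size + pr.2.size)).sum + szE E' := by
            simp [szE, hE''def]
          have h2 := zip_size_le ss ts
          have h3 : szE ((Term.app f ss, Term.app f ts) :: E') =
              (Term.app f ss).size + (Term.app f ts).size + szE E' := by
            simp [szE]
          rw [Term.size_app, Term.size_app] at h3
          omega
        have hUL'' : UL E'' ν := by
          rintro pr2 hpr2
          rcases List.mem_append.1 hpr2 with hz | hz
          · exact map_eq_zip hmap pr2 hz
          · exact hνE' pr2 hz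
        obtain ⟨θ, hθ⟩ := IHm (szE E'') (lt_of_lt_of_le hsz hm) E''
          (le_trans (VC_mono hvars) hv) le_rfl ⟨ν, hUL''⟩
        exact ⟨θ, decomp_mgu hlen hθ⟩

end Unification
section MGU
variable {F : Type}

theorem exists_mgu (s t : Term F) (hu : ∃ ν, Unifies ν s t) : ∃ θ, IsMGU θ s t := by
  obtain ⟨ν, hν⟩ := hu
  have hUL : UL [(s, t)] ν := by
    rintro pr hpr
    rcases List.mem_cons.1 hpr with rfl | hpr
    · exact hν
    · simp at hpr
  obtain ⟨θ, hθ⟩ := unifyL (VC [(s, t)]) (szE [(s, t)]) [(s, t)] le_rfl le_rfl ⟨ν, hUL⟩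
  refine ⟨θ, hθ.1 (s, t) (List.mem_cons_self), fun τ hτ => hθ.2 τ ?_⟩
  rintro pr hpr
  rcases List.mem_cons.1 hpr with rfl | hpr
  · exact hτ
  · simp at hpr

end MGU
section Weapon
variable {F : Type} {R : TRS F}

theorem mem_le_fold (l : List Nat) : ∀ x ∈ l, x ≤ l.foldr max 0 := by
  induction l with
  | nil => intro x hx; cases hx
  | cons a l ih =>
    intro x hx
    rcases List.mem_cons.1 hx with rfl | hx
    · exact le_max_left _ _
    · exact le_trans (ih x hx) (le_max_right _ _)

theorem memRHS {e : Rule F} (h : e ∈ R) : e ∈ RHSset R := Set.mem_union_left _ h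

/-- either the two rules contribute a rhs-overlap equation to `RHSset R`, or the
corresponding instances of the left-hand sides coincide -/
theorem overlap_or_eq {a b g h : Term F} (hab : (a, b) ∈ R) (hgh : (g, h) ∈ R)
    {β η : Nat → Term F} (hcom : b.subst β = h.subst η) :
    (∃ θ ρ, IsRenaming ρ ∧
      (a.subst θ, (g.subst ρ).subst θ) ∈ RHSset R) ∨ a.subst β = g.subst η := by
  classical
  set N : Nat := (a.varsL ++ b.varsL ++ g.varsL ++ h.varsL).foldr max 0 + 1 with hN
  have hbound : ∀ x ∈ a.varsL ++ b.varsL ++ g.varsL ++ h.varsL, x < N := by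
    intro x hx; have := mem_le_fold _ x hx; omega
  set ρ : Nat → Term F := fun n => Term.var (n + N) with hρ
  set ν : Nat → Term F := fun x => if x < N then β x else η (x - N) with hν
  have hren : IsRenaming ρ := ⟨fun n => n + N, add_left_injective N, fun n => rfl⟩
  have hbν : b.subst ν = b.subst β := by
    refine Term.subst_ext_vars b (fun x hx => ?_)
    have : x < N := hbound x (by simp [hx])
    simp [hν, this]
  have haν : a.subst ν = a.subst β := by
    refine Term.subst_ext_vars a (fun x hx => ?_)
    have : x < N := hbound x (by simp [hx])
    simp [hν, this]
  have hcompρ : ∀ t : Term F, (t.subst ρ).subst ν = t.subst η := by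
    intro t
    rw [Term.subst_subst]
    refine Term.subst_ext_vars t (fun x _ => ?_)
    have h1 : (ρ x).subst ν = ν (x + N) := by simp [hρ, Term.subst_var']
    rw [h1, hν]
    simp
  have hunif : Unifies ν b (h.subst ρ) := by
    unfold Unifies
    rw [hbν, hcompρ, hcom]
  obtain ⟨θ, hθu, hθm⟩ := exists_mgu b (h.subst ρ) ⟨ν, hunif⟩
  obtain ⟨δ, hδ⟩ := hθm ν hunif
  have factor : ∀ t : Term F, t.subst ν = (t.subst θ).subst δ := by
    intro t
    rw [Term.subst_subst]
    exact Term.subst_ext_vars t (fun x _ => hδ x)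
  by_cases heq : a.subst θ = (g.subst ρ).subst θ
  · right
    have e1 : a.subst ν = (a.subst θ).subst δ := factor a
    have e2 : (g.subst ρ).subst ν = ((g.subst ρ).subst θ).subst δ := factor _
    calc a.subst β = a.subst ν := haν.symm
      _ = (a.subst θ).subst δ := e1
      _ = ((g.subst ρ).subst θ).subst δ := by rw [heq]
      _ = (g.subst ρ).subst ν := e2.symm
      _ = g.subst η := hcompρ g
  · left
    refine ⟨θ, ρ, hren, Set.mem_union_right _ ?_⟩
    exact ⟨a, b, g, h, ρ, θ, hab, hgh, hren, ⟨hθu, hθm⟩, heq, rfl⟩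

/-- two rules whose right-hand sides have a common instance must have
left-hand sides with the same root symbol -/
theorem rhs_common_instance (hq : QuasiDet (RHSset R))
    {a b g h : Term F} (hab : (a, b) ∈ R) (hgh : (g, h) ∈ R)
    (hroot : a.root ≠ g.root) {β η : Nat → Term F}
    (hcom : b.subst β = h.subst η) : False := by
  have hav : ¬ a.IsVar := (hq.1 _ (memRHS hab)).1
  have hgv : ¬ g.IsVar := (hq.1 _ (memRHS hgh)).1
  have hlhs_ne : a.subst β ≠ g.subst η := by
    intro hEq
    apply hroot
    rw [← Term.root_subst hav β, hEq, Term.root_subst hgv]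
  rcases overlap_or_eq hab hgh hcom with ⟨θ₁, ρ₁, hren₁, hm₁⟩ | hEq
  · rcases overlap_or_eq hgh hab hcom.symm with ⟨θ₂, ρ₂, hren₂, hm₂⟩ | hEq
    · -- both overlap equations exist: crossed root-pair repetition
      set E1 : Rule F := (a.subst θ₁, (g.subst ρ₁).subst θ₁)
      set E2 : Rule F := (g.subst θ₂, (a.subst ρ₂).subst θ₂)
      have hgρv : ¬ (g.subst ρ₁).IsVar := by
        obtain ⟨f', ts', rfl⟩ := Term.not_isVar_iff.1 hgv
        rw [Term.subst_app]
        simp [Term.IsVar]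
      have haρv : ¬ (a.subst ρ₂).IsVar := by
        obtain ⟨f', ts', rfl⟩ := Term.not_isVar_iff.1 hav
        rw [Term.subst_app]
        simp [Term.IsVar]
      have r11 : E1.1.root = a.root := Term.root_subst hav θ₁
      have r12 : E1.2.root = g.root := by
        rw [Term.root_subst hgρv θ₁, Term.root_subst hgv ρ₁]
      have r21 : E2.1.root = g.root := Term.root_subst hgv θ₂
      have r22 : E2.2.root = a.root := by
        rw [Term.root_subst haρv θ₂, Term.root_subst hav ρ₂]
      have hne : E1 ≠ E2 := by
        intro hEq
        apply hroot
        have := congrArg (fun e : Rule F => e.1.root) hEq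
        simpa [r11, r21] using this
      have hsim : RootPairSimilar E1 E2 := Or.inr ⟨by rw [r11, r22], by rw [r12, r21]⟩
      exact hq.2.2 E1 hm₁ E2 hm₂ hne hsim
    · exact hlhs_ne hEq.symm
  · exact hlhs_ne hEq

end Weapon
section Main
variable {F : Type} {R : TRS F}

theorem mixed_case (hterm : Terminating R) (hconf : Confluent R) (hfc : FCclosed R)
    (hq : QuasiDet (RHSset R)) {l r l' r' : Term F}
    (hA : (l, r) ∈ R) (hB : (l', r') ∈ R) {s u : Term F}
    (hs : NFof R s u) (hsroot : s.root = l'.root) (hll : l.root = l'.root)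
    (hur : u.root = r'.root) {a b : Term F} {μ : Nat → Term F}
    (haR : (a, b) ∈ R) (hub : u = b.subst μ) (haroot : a.root = r.root)
    (hlr : l.root ≠ r.root) : False := by
  have hl'r' : l'.root ≠ r'.root := hq.2.1 _ (memRHS hB)
  rcases chain_lemma hterm hconf hfc s u hs with hL | ⟨c, d, ν, hcdR, hud, hcν⟩
  · rw [hL, hsroot] at hur
    exact hl'r' hur
  · have hcv : ¬ c.IsVar := (hq.1 _ (memRHS hcdR)).1
    have hdv : ¬ d.IsVar := (hq.1 _ (memRHS hcdR)).2
    have hcroot : c.root = l'.root := by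
      rw [← Term.root_subst hcv ν, hcν, hsroot]
    have hdroot : d.root = r'.root := by
      rw [← Term.root_subst hdv ν, ← hud, hur]
    by_cases hcd : (c, d) = ((l', r') : Rule F)
    · -- the chain rule is exactly (l', r'); so u is a common instance of b and r'
      have hd : d = r' := congrArg Prod.snd hcd
      subst hd
      have hcomm : b.subst μ = d.subst ν := by rw [← hub, hud]
      have hane : a.root ≠ l'.root := by
        rw [haroot, ← hll]
        exact fun hh => hlr hh.symm
      exact rhs_common_instance hq haR hB hane hcomm
    · have hsim : RootPairSimilar (c, d) (l', r') := Or.inl ⟨hcroot, hdroot⟩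
      exact hq.2.2 _ (memRHS hcdR) _ (memRHS hB) hcd hsim

end Main
/-- left-hand sides of distinct rules of an LM-system are not unifiable
(formulated via common instances, which is equivalent under renaming apart). -/
theorem lhs_not_unifiable {F : Type} (R : TRS F) (hlm : LMSystem R)
    (e1 e2 : Rule F) (h1 : e1 ∈ R) (h2 : e2 ∈ R) (hne : e1 ≠ e2) :
    ¬ ∃ (σ τ : Nat → Term F), e1.1.subst σ = e2.1.subst τ := by
  rintro ⟨σ, τ, hcom⟩
  obtain ⟨l1, r1⟩ := e1
  obtain ⟨l2, r2⟩ := e2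
  simp only at hcom
  have hq := hlm.quasiDet
  have hconf := hlm.convergent.1
  have hterm := hlm.convergent.2
  have hfc := hlm.forwardClosed
  have hl1v : ¬ l1.IsVar := (hq.1 _ (memRHS h1)).1
  have hr1v : ¬ r1.IsVar := (hq.1 _ (memRHS h1)).2
  have hl2v : ¬ l2.IsVar := (hq.1 _ (memRHS h2)).1
  have hr2v : ¬ r2.IsVar := (hq.1 _ (memRHS h2)).2
  set s : Term F := l1.subst σ with hsdef
  have hs2 : s = l2.subst τ := hcom
  have hrootl : l1.root = l2.root := by
    rw [← Term.root_subst hl1v σ, ← Term.root_subst hl2v τ, ← hcom]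
  -- the right-hand-side roots must differ
  have hrr : r1.root ≠ r2.root := by
    intro h
    exact hq.2.2 _ (memRHS h1) _ (memRHS h2) hne (Or.inl ⟨hrootl, h⟩)
  obtain ⟨u, hu⟩ := exists_nf hterm s
  have step1 : OneStep R s (r1.subst σ) := ⟨(l1, r1), h1, ruleStep_root σ⟩
  have step2 : OneStep R s (r2.subst τ) := by
    refine ⟨(l2, r2), h2, ?_⟩
    rw [hs2]
    exact ruleStep_root τ
  have hnf1 : NFof R (r1.subst σ) u :=
    nfof_of_reduct hconf hu (Relation.ReflTransGen.single step1)
  have hnf2 : NFof R (r2.subst τ) u :=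
    nfof_of_reduct hconf hu (Relation.ReflTransGen.single step2)
  have hlr1 : l1.root ≠ r1.root := hq.2.1 _ (memRHS h1)
  have hlr2 : l2.root ≠ r2.root := hq.2.1 _ (memRHS h2)
  have hsroot1 : s.root = l1.root := Term.root_subst hl1v σ
  rcases chain_lemma hterm hconf hfc _ u hnf1 with hL1 | ⟨a1, b1, μ1, hR1, hub1, hra1⟩
  · rcases chain_lemma hterm hconf hfc _ u hnf2 with hL2 | ⟨a2, b2, μ2, hR2, hub2, hra2⟩
    · rw [Term.root_subst hr1v σ] at hL1
      rw [Term.root_subst hr2v τ] at hL2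
      exact hrr (hL1 ▸ hL2 ▸ rfl)
    · -- side 2 ends with a root step, side 1 does not
      have ha2v : ¬ a2.IsVar := (hq.1 _ (memRHS hR2)).1
      have ha2root : a2.root = r2.root := by
        rw [← Term.root_subst ha2v μ2, hra2, Term.root_subst hr2v τ]
      refine mixed_case hterm hconf hfc hq h2 h1 hu (by rw [hsroot1]) hrootl.symm ?_
        hR2 hub2 ha2root (fun hh => hlr2 hh)
      rw [hL1, Term.root_subst hr1v σ]
  · rcases chain_lemma hterm hconf hfc _ u hnf2 with hL2 | ⟨a2, b2, μ2, hR2, hub2, hra2⟩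
    · -- side 1 ends with a root step, side 2 does not
      have ha1v : ¬ a1.IsVar := (hq.1 _ (memRHS hR1)).1
      have ha1root : a1.root = r1.root := by
        rw [← Term.root_subst ha1v μ1, hra1, Term.root_subst hr1v σ]
      refine mixed_case hterm hconf hfc hq h1 h2 hu (by rw [hsroot1, hrootl]) hrootl ?_
        hR1 hub1 ha1root (fun hh => hlr1 hh)
      rw [hL2, Term.root_subst hr2v τ]
    · -- both sides end with root steps: common instance of two right-hand sides
      have ha1v : ¬ a1.IsVar := (hq.1 _ (memRHS hR1)).1
      have ha2v : ¬ a2.IsVar := (hq.1 _ (memRHS hR2)).1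
      have ha1root : a1.root = r1.root := by
        rw [← Term.root_subst ha1v μ1, hra1, Term.root_subst hr1v σ]
      have ha2root : a2.root = r2.root := by
        rw [← Term.root_subst ha2v μ2, hra2, Term.root_subst hr2v τ]
      have hane : a1.root ≠ a2.root := by
        rw [ha1root, ha2root]; exact hrr
      exact rhs_common_instance hq hR1 hR2 hane (by rw [← hub1, hub2])
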